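/- Completion of a partial gauge transformation (Lemma 1.9 of Yekutieli): Let (x, g, a) be a descent datum in a cosimplicial crossed groupoid G, let (x', g') be a partial descent datum (x' ∈ Ob(G⁰), g' ∈ G¹₁(x'_{(0)}, x'_{(1)})), and let (f, c) be a partial gauge transformation (x,g) → (x',g'), i.e. f ∈ G⁰₁(x, x'), c ∈ G¹₂(x_{(0)}) with g' = f_{(1)} ∘ g ∘ D(c) ∘ f_{(0)}⁻¹. Then there exists a unique element a' ∈ G²₂(x'_{(0)}) such that (x', g', a') is a descent datum and (f, c) is a gauge transformation (x,g,a) → (x',g',a'). Explicitly a' = Ad(f_{(0)})(c_{(0,2)}⁻¹ ∘ a ∘ Ad(g_{(0,1)}⁻¹)(c_{(1,2)}) ∘ c_{(0,1)}). -/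

import Mathlib

/-! Crossed groupoids (= crossed modules over groupoids), following Yekutieli,
"Combinatorial descent data for gerbes". -/

structure CrossedGroupoid : Type 1 where
  Obj : Type
  Hom : Obj → Obj → Type
  id : ∀ x, Hom x x
  comp : ∀ {x y z}, Hom y z → Hom x y → Hom x z
  inv : ∀ {x y}, Hom x y → Hom y x
  comp_assoc : ∀ {x y z w} (h : Hom z w) (g : Hom y z) (f : Hom x y),
    comp (comp h g) f = comp h (comp g f)
  id_comp : ∀ {x y} (f : Hom x y), comp (id y) f = f
  comp_id : ∀ {x y} (f : Hom x y), comp f (id x) = f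
  inv_comp : ∀ {x y} (f : Hom x y), comp (inv f) f = id x
  comp_inv : ∀ {x y} (f : Hom x y), comp f (inv f) = id y
  -- the totally disconnected groupoid 𝒢₂, i.e. a family of groups
  G2 : Obj → Type
  mul : ∀ {x}, G2 x → G2 x → G2 x
  one : ∀ x, G2 x
  inv2 : ∀ {x}, G2 x → G2 x
  mul_assoc : ∀ {x} (a b c : G2 x), mul (mul a b) c = mul a (mul b c)
  one_mul : ∀ {x} (a : G2 x), mul (one x) a = a
  mul_one : ∀ {x} (a : G2 x), mul a (one x) = a
  inv2_mul : ∀ {x} (a : G2 x), mul (inv2 a) a = one x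
  -- the twisting: an action of 𝒢₁ on 𝒢₂
  Ad : ∀ {x y}, Hom x y → G2 x → G2 y
  Ad_mul : ∀ {x y} (g : Hom x y) (a b : G2 x), Ad g (mul a b) = mul (Ad g a) (Ad g b)
  Ad_one : ∀ {x y} (g : Hom x y), Ad g (one x) = one y
  Ad_id : ∀ {x} (a : G2 x), Ad (id x) a = a
  Ad_comp : ∀ {x y z} (h : Hom y z) (g : Hom x y) (a : G2 x),
    Ad (comp h g) a = Ad h (Ad g a)
  -- the feedback D : 𝒢₂ → 𝒢₁, identity on objects
  D : ∀ {x}, G2 x → Hom x x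
  D_mul : ∀ {x} (a b : G2 x), D (mul a b) = comp (D a) (D b)
  D_one : ∀ x, D (one x) = id x
  -- equivariance of the feedback
  D_Ad : ∀ {x y} (g : Hom x y) (a : G2 x), D (Ad g a) = comp (comp g (D a)) (inv g)
  -- Peiffer condition
  peiffer : ∀ {x} (a b : G2 x), Ad (D a) b = mul (mul a b) (inv2 a)

namespace CrossedGroupoid

/-- Transport of 1-morphisms along equalities of objects. -/
def hcast (G : CrossedGroupoid) {x x' y y' : G.Obj} (ex : x = x') (ey : y = y')
    (f : G.Hom x y) : G.Hom x' y' := ey ▸ ex ▸ f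

/-- Transport of 2-morphisms along an equality of objects. -/
def cast2 (G : CrossedGroupoid) {x x' : G.Obj} (e : x = x') (a : G.G2 x) : G.G2 x' := e ▸ a

/-- The relation "isomorphic in 𝒢₁". -/
def pi0Rel (G : CrossedGroupoid) : G.Obj → G.Obj → Prop := fun x y => Nonempty (G.Hom x y)

/-- π₀ of a crossed groupoid: isomorphism classes of objects of 𝒢₁. -/
def pi0 (G : CrossedGroupoid) : Type := Quot G.pi0Rel

/-- The right action relation on a hom-set: g' = g ∘ D(a). -/
def homRel (G : CrossedGroupoid) (x x' : G.Obj) : G.Hom x x' → G.Hom x x' → Prop :=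
  fun g g' => ∃ a : G.G2 x, g' = G.comp g (G.D a)

/-- π₁(G, x, x') := 𝒢₁(x,x') / 𝒢₂(x). -/
def pi1' (G : CrossedGroupoid) (x x' : G.Obj) : Type := Quot (G.homRel x x')

/-- π₁(G, x) = Coker(D : 𝒢₂(x) → 𝒢₁(x)) as a quotient set. -/
def pi1 (G : CrossedGroupoid) (x : G.Obj) : Type := G.pi1' x x

/-- π₂(G, x) = Ker(D : 𝒢₂(x) → 𝒢₁(x)). -/
def pi2 (G : CrossedGroupoid) (x : G.Obj) : Type := {a : G.G2 x // G.D a = G.id x}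

end CrossedGroupoid

/-- A morphism of crossed groupoids. -/
structure CrossedGroupoidHom (G H : CrossedGroupoid) where
  obj : G.Obj → H.Obj
  map1 : ∀ {x y : G.Obj}, G.Hom x y → H.Hom (obj x) (obj y)
  map2 : ∀ {x : G.Obj}, G.G2 x → H.G2 (obj x)
  map1_comp : ∀ {x y z : G.Obj} (g : G.Hom y z) (f : G.Hom x y),
    map1 (G.comp g f) = H.comp (map1 g) (map1 f)
  map1_id : ∀ x : G.Obj, map1 (G.id x) = H.id (obj x)
  map2_mul : ∀ {x : G.Obj} (a b : G.G2 x), map2 (G.mul a b) = H.mul (map2 a) (map2 b)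
  map_D : ∀ {x : G.Obj} (a : G.G2 x), map1 (G.D a) = H.D (map2 a)
  map_Ad : ∀ {x y : G.Obj} (g : G.Hom x y) (a : G.G2 x),
    map2 (G.Ad g a) = H.Ad (map1 g) (map2 a)

namespace CrossedGroupoidHom

/-- Identity morphism of crossed groupoids. -/
def id (G : CrossedGroupoid) : CrossedGroupoidHom G G where
  obj := fun x => x
  map1 := fun f => f
  map2 := fun a => a
  map1_comp := fun _ _ => rfl
  map1_id := fun _ => rfl
  map2_mul := fun _ _ => rfl
  map_D := fun _ => rfl
  map_Ad := fun _ _ => rfl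

/-- Composition of morphisms of crossed groupoids. -/
def comp {G H K : CrossedGroupoid} (F₂ : CrossedGroupoidHom H K) (F₁ : CrossedGroupoidHom G H) :
    CrossedGroupoidHom G K where
  obj := fun x => F₂.obj (F₁.obj x)
  map1 := fun f => F₂.map1 (F₁.map1 f)
  map2 := fun a => F₂.map2 (F₁.map2 a)
  map1_comp := fun g f => by rw [F₁.map1_comp, F₂.map1_comp]
  map1_id := fun x => by rw [F₁.map1_id, F₂.map1_id]
  map2_mul := fun a b => by rw [F₁.map2_mul, F₂.map2_mul]
  map_D := fun a => by rw [F₁.map_D, F₂.map_D]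
  map_Ad := fun g a => by rw [F₁.map_Ad, F₂.map_Ad]

variable {G H : CrossedGroupoid}

/-- The induced map on π₀. -/
def pi0map (F : CrossedGroupoidHom G H) : G.pi0 → H.pi0 :=
  Quot.map F.obj (fun _ _ h => ⟨F.map1 h.some⟩)

/-- The induced map on π₁(−, x, x'). -/
def pi1'map (F : CrossedGroupoidHom G H) (x x' : G.Obj) :
    G.pi1' x x' → H.pi1' (F.obj x) (F.obj x') :=
  Quot.map F.map1 (by
    rintro g g' ⟨a, rfl⟩
    exact ⟨F.map2 a, by rw [F.map1_comp, F.map_D]⟩)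

/-- The induced map on π₁(−, x). -/
def pi1map (F : CrossedGroupoidHom G H) (x : G.Obj) : G.pi1 x → H.pi1 (F.obj x) :=
  F.pi1'map x x

/-- The induced map on π₂(−, x). -/
def pi2map (F : CrossedGroupoidHom G H) (x : G.Obj) : G.pi2 x → H.pi2 (F.obj x) :=
  fun a => ⟨F.map2 a.1, by rw [← F.map_D, a.2, F.map1_id]⟩

/-- A weak equivalence of crossed groupoids: bijective on π₀, π₁ and π₂. -/
def IsWeakEquiv (F : CrossedGroupoidHom G H) : Prop :=
  Function.Bijective F.pi0map ∧ (∀ x, Function.Bijective (F.pi1map x)) ∧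
    (∀ x, Function.Bijective (F.pi2map x))

end CrossedGroupoidHom

/-! ### Combinatorics of the simplex category -/

/-- The vertex (i) of Δ^q, as a monotone map Δ⁰ → Δ^q. -/
def vtxMap {q : ℕ} (i : Fin (q + 1)) : Fin 1 →o Fin (q + 1) :=
  ⟨fun _ => i, fun _ _ _ => le_rfl⟩

/-- The edge (i,j) of Δ^q, as a monotone map Δ¹ → Δ^q. -/
def edgeMap {q : ℕ} (i j : Fin (q + 1)) (h : i ≤ j) : Fin 2 →o Fin (q + 1) :=
  ⟨fun k => if (k : ℕ) = 0 then i else j, by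
    intro a b hab
    have hab' : (a : ℕ) ≤ (b : ℕ) := hab
    show (if (a : ℕ) = 0 then i else j) ≤ (if (b : ℕ) = 0 then i else j)
    by_cases ha : (a : ℕ) = 0
    · by_cases hb : (b : ℕ) = 0
      · rw [if_pos ha, if_pos hb]
      · rw [if_pos ha, if_neg hb]; exact h
    · have hb : ¬ (b : ℕ) = 0 := fun hb0 => ha (Nat.le_zero.mp (hb0 ▸ hab'))
      rw [if_neg ha, if_neg hb]⟩

/-- The triangle (i,j,k) of Δ^q, as a monotone map Δ² → Δ^q. -/
def triMap {q : ℕ} (i j k : Fin (q + 1)) (hij : i ≤ j) (hjk : j ≤ k) :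
    Fin 3 →o Fin (q + 1) :=
  ⟨fun m => if (m : ℕ) = 0 then i else if (m : ℕ) = 1 then j else k, by
    intro a b hab
    have hab' : (a : ℕ) ≤ (b : ℕ) := hab
    show (if (a : ℕ) = 0 then i else if (a : ℕ) = 1 then j else k) ≤
      (if (b : ℕ) = 0 then i else if (b : ℕ) = 1 then j else k)
    by_cases ha0 : (a : ℕ) = 0
    · by_cases hb0 : (b : ℕ) = 0
      · rw [if_pos ha0, if_pos hb0]
      · by_cases hb1 : (b : ℕ) = 1
        · rw [if_pos ha0, if_neg hb0, if_pos hb1]; exact hij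
        · rw [if_pos ha0, if_neg hb0, if_neg hb1]; exact hij.trans hjk
    · by_cases ha1 : (a : ℕ) = 1
      · have hb0 : ¬ (b : ℕ) = 0 := by omega
        by_cases hb1 : (b : ℕ) = 1
        · rw [if_neg ha0, if_pos ha1, if_neg hb0, if_pos hb1]
        · rw [if_neg ha0, if_pos ha1, if_neg hb0, if_neg hb1]; exact hjk
      · have hb0 : ¬ (b : ℕ) = 0 := by omega
        have hb1 : ¬ (b : ℕ) = 1 := by omega
        rw [if_neg ha0, if_neg ha1, if_neg hb0, if_neg hb1]⟩

theorem comp_vtxMap {p q : ℕ} (α : Fin (p + 1) →o Fin (q + 1)) (i : Fin (p + 1)) :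
    α.comp (vtxMap i) = vtxMap (α i) := rfl

/-! ### Cosimplicial crossed groupoids -/

/-- A cosimplicial crossed groupoid: a functor Δ → CrGrpd. -/
structure CosimplicialCrossedGroupoid : Type 1 where
  obj : ℕ → CrossedGroupoid
  map : ∀ {p q : ℕ}, (Fin (p + 1) →o Fin (q + 1)) → CrossedGroupoidHom (obj p) (obj q)
  map_id : ∀ p, map (OrderHom.id : Fin (p + 1) →o Fin (p + 1)) = CrossedGroupoidHom.id (obj p)
  map_comp : ∀ {p q r : ℕ} (β : Fin (q + 1) →o Fin (r + 1)) (α : Fin (p + 1) →o Fin (q + 1)),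
    map (β.comp α) = (map β).comp (map α)

namespace CosimplicialCrossedGroupoid

variable (G : CosimplicialCrossedGroupoid)

theorem obj_comp {p q r : ℕ} (β : Fin (q + 1) →o Fin (r + 1)) (α : Fin (p + 1) →o Fin (q + 1))
    (x : (G.obj p).Obj) :
    (G.map β).obj ((G.map α).obj x) = (G.map (β.comp α)).obj x := by
  rw [G.map_comp]; rfl

/-- The object x of G⁰ pushed to the vertex (i) of Δ^q. -/
def X (x : (G.obj 0).Obj) (q : ℕ) (i : Fin (q + 1)) : (G.obj q).Obj :=
  (G.map (vtxMap i)).obj x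

theorem X_push (x : (G.obj 0).Obj) {p q : ℕ} (α : Fin (p + 1) →o Fin (q + 1))
    (i : Fin (p + 1)) : (G.map α).obj (G.X x p i) = G.X x q (α i) := by
  unfold X
  rw [obj_comp, comp_vtxMap]

/-- Pushing a 1-morphism between vertex objects along α. -/
def push1 {x : (G.obj 0).Obj} {p q : ℕ} (α : Fin (p + 1) →o Fin (q + 1))
    {i j : Fin (p + 1)} (g : (G.obj p).Hom (G.X x p i) (G.X x p j)) :
    (G.obj q).Hom (G.X x q (α i)) (G.X x q (α j)) :=
  (G.obj q).hcast (G.X_push x α i) (G.X_push x α j) ((G.map α).map1 g)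

/-- Pushing a 2-morphism at a vertex object along α. -/
def push2 {x : (G.obj 0).Obj} {p q : ℕ} (α : Fin (p + 1) →o Fin (q + 1))
    {i : Fin (p + 1)} (a : (G.obj p).G2 (G.X x p i)) :
    (G.obj q).G2 (G.X x q (α i)) :=
  (G.obj q).cast2 (G.X_push x α i) ((G.map α).map2 a)

/-- Yekutieli's combinatorial descent conditions (Definition 1.5):
the failure-of-1-cocycle condition and the twisted 2-cocycle condition. -/
def IsDescent (x : (G.obj 0).Obj)
    (g : (G.obj 1).Hom (G.X x 1 0) (G.X x 1 1))
    (a : (G.obj 2).G2 (G.X x 2 0)) : Prop :=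
  ((G.obj 2).comp ((G.obj 2).comp ((G.obj 2).inv (G.push1 (edgeMap 0 2 (by decide)) g))
      (G.push1 (edgeMap 1 2 (by decide)) g)) (G.push1 (edgeMap 0 1 (by decide)) g)
    = (G.obj 2).D a)
  ∧
  ((G.obj 3).mul ((G.obj 3).mul
        ((G.obj 3).inv2 (G.push2 (triMap 0 1 3 (by decide) (by decide)) a))
        (G.push2 (triMap 0 2 3 (by decide) (by decide)) a))
      (G.push2 (triMap 0 1 2 (by decide) (by decide)) a)
    = (G.obj 3).Ad ((G.obj 3).inv (G.push1 (edgeMap 0 1 (by decide)) g))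
        (G.push2 (triMap 1 2 3 (by decide) (by decide)) a))

/-- A combinatorial descent datum (Definition 1.5). -/
structure Desc (G : CosimplicialCrossedGroupoid) where
  x : (G.obj 0).Obj
  g : (G.obj 1).Hom (G.X x 1 0) (G.X x 1 1)
  a : (G.obj 2).G2 (G.X x 2 0)
  isDescent : G.IsDescent x g a

/-- The Yekutieli gauge-transformation conditions (Definition 1.7) for a pair (f, c). -/
def IsGauge (x : (G.obj 0).Obj) (g : (G.obj 1).Hom (G.X x 1 0) (G.X x 1 1))
    (a : (G.obj 2).G2 (G.X x 2 0))
    (x' : (G.obj 0).Obj) (g' : (G.obj 1).Hom (G.X x' 1 0) (G.X x' 1 1))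
    (a' : (G.obj 2).G2 (G.X x' 2 0))
    (f : (G.obj 0).Hom x x') (c : (G.obj 1).G2 (G.X x 1 0)) : Prop :=
  (g' = (G.obj 1).comp ((G.obj 1).comp ((G.obj 1).comp
      ((G.map (vtxMap (1 : Fin 2))).map1 f) g) ((G.obj 1).D c))
      ((G.obj 1).inv ((G.map (vtxMap (0 : Fin 2))).map1 f)))
  ∧
  (a' = (G.obj 2).Ad ((G.map (vtxMap (0 : Fin 3))).map1 f)
    ((G.obj 2).mul ((G.obj 2).mul ((G.obj 2).mul
        ((G.obj 2).inv2 (G.push2 (edgeMap 0 2 (by decide)) c)) a)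
        ((G.obj 2).Ad ((G.obj 2).inv (G.push1 (edgeMap 0 1 (by decide)) g))
          (G.push2 (edgeMap 1 2 (by decide)) c)))
      (G.push2 (edgeMap 0 1 (by decide)) c)))

/-- Gauge equivalence of descent data. -/
def GaugeEquiv (P Q : G.Desc) : Prop :=
  ∃ (f : (G.obj 0).Hom P.x Q.x) (c : (G.obj 1).G2 (G.X P.x 1 0)),
    G.IsGauge P.x P.g P.a Q.x Q.g Q.a f c

/-- The explicit formula for the transported 2-morphism a'
(Definition 1.7(ii) / Lemma 1.9). -/
def transportA {x x' : (G.obj 0).Obj} (f : (G.obj 0).Hom x x')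
    (g : (G.obj 1).Hom (G.X x 1 0) (G.X x 1 1))
    (a : (G.obj 2).G2 (G.X x 2 0)) (c : (G.obj 1).G2 (G.X x 1 0)) :
    (G.obj 2).G2 (G.X x' 2 0) :=
  (G.obj 2).Ad ((G.map (vtxMap (0 : Fin 3))).map1 f)
    ((G.obj 2).mul ((G.obj 2).mul ((G.obj 2).mul
        ((G.obj 2).inv2 (G.push2 (edgeMap 0 2 (by decide)) c)) a)
        ((G.obj 2).Ad ((G.obj 2).inv (G.push1 (edgeMap 0 1 (by decide)) g))
          (G.push2 (edgeMap 1 2 (by decide)) c)))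
      (G.push2 (edgeMap 0 1 (by decide)) c))

end CosimplicialCrossedGroupoid

/-- A morphism of cosimplicial crossed groupoids. -/
structure CosimplicialMor (G H : CosimplicialCrossedGroupoid) where
  app : ∀ p, CrossedGroupoidHom (G.obj p) (H.obj p)
  naturality : ∀ {p q : ℕ} (α : Fin (p + 1) →o Fin (q + 1)),
    (app q).comp (G.map α) = (H.map α).comp (app p)

namespace CosimplicialMor

variable {G H : CosimplicialCrossedGroupoid}

theorem app_X (F : CosimplicialMor G H) (x : (G.obj 0).Obj) (q : ℕ) (i : Fin (q + 1)) :
    (F.app q).obj (G.X x q i) = H.X ((F.app 0).obj x) q i :=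
  congrFun (congrArg CrossedGroupoidHom.obj (F.naturality (vtxMap i))) x

/-- Image of an object of G⁰. -/
def objD (F : CosimplicialMor G H) (x : (G.obj 0).Obj) : (H.obj 0).Obj := (F.app 0).obj x

/-- Image of a 1-morphism in dimension 0. -/
def mapF (F : CosimplicialMor G H) {x x' : (G.obj 0).Obj} (f : (G.obj 0).Hom x x') :
    (H.obj 0).Hom (F.objD x) (F.objD x') := (F.app 0).map1 f

/-- Image of the 1-morphism part of a descent datum. -/
def mapG (F : CosimplicialMor G H) {x : (G.obj 0).Obj}
    (g : (G.obj 1).Hom (G.X x 1 0) (G.X x 1 1)) :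
    (H.obj 1).Hom (H.X (F.objD x) 1 0) (H.X (F.objD x) 1 1) :=
  (H.obj 1).hcast (F.app_X x 1 0) (F.app_X x 1 1) ((F.app 1).map1 g)

/-- Image of the 2-morphism part of a descent datum. -/
def mapA (F : CosimplicialMor G H) {x : (G.obj 0).Obj} (a : (G.obj 2).G2 (G.X x 2 0)) :
    (H.obj 2).G2 (H.X (F.objD x) 2 0) :=
  (H.obj 2).cast2 (F.app_X x 2 0) ((F.app 2).map2 a)

/-- Image of the 2-morphism part of a gauge transformation. -/
def mapC (F : CosimplicialMor G H) {x : (G.obj 0).Obj} (c : (G.obj 1).G2 (G.X x 1 0)) :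
    (H.obj 1).G2 (H.X (F.objD x) 1 0) :=
  (H.obj 1).cast2 (F.app_X x 1 0) ((F.app 1).map2 c)

/-- A weak equivalence of cosimplicial crossed groupoids. -/
def IsWeakEquiv (F : CosimplicialMor G H) : Prop := ∀ p, (F.app p).IsWeakEquiv

end CosimplicialMor

/-! ### Auxiliary algebra in a single crossed groupoid -/

namespace CrossedGroupoid

variable (H : CrossedGroupoid)

instance instGroupG2 (x : H.Obj) : Group (H.G2 x) where
  mul := H.mul
  one := H.one x
  inv := H.inv2
  div := fun a b => H.mul a (H.inv2 b)
  mul_assoc := H.mul_assoc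
  one_mul := H.one_mul
  mul_one := H.mul_one
  inv_mul_cancel := H.inv2_mul

variable {H}

theorem mul_def {x : H.Obj} (a b : H.G2 x) : H.mul a b = a * b := rfl
theorem inv2_def {x : H.Obj} (a : H.G2 x) : H.inv2 a = a⁻¹ := rfl
theorem one_def (x : H.Obj) : H.one x = 1 := rfl

/-- `Ad` as a monoid hom. -/
def AdHom {x y : H.Obj} (g : H.Hom x y) : H.G2 x →* H.G2 y where
  toFun := H.Ad g
  map_one' := H.Ad_one g
  map_mul' := H.Ad_mul g

theorem Ad_def {x y : H.Obj} (g : H.Hom x y) (a : H.G2 x) : H.Ad g a = AdHom g a := rfl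

theorem Ad_inv2 {x y : H.Obj} (g : H.Hom x y) (a : H.G2 x) :
    H.Ad g (H.inv2 a) = H.inv2 (H.Ad g a) := by
  rw [Ad_def, Ad_def, inv2_def, inv2_def, map_inv]

/- groupoid lemmas -/
theorem inv_comp_cancel_left {x y z : H.Obj} (g : H.Hom y z) (f : H.Hom x y) :
    H.comp (H.inv g) (H.comp g f) = f := by
  rw [← H.comp_assoc, H.inv_comp, H.id_comp]

theorem comp_inv_cancel_left {x y z : H.Obj} (g : H.Hom z y) (f : H.Hom x y) :
    H.comp g (H.comp (H.inv g) f) = f := by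
  rw [← H.comp_assoc, H.comp_inv, H.id_comp]

theorem inv_unique {x y : H.Obj} (g : H.Hom x y) (k : H.Hom y x)
    (h : H.comp k g = H.id x) : k = H.inv g := by
  have := congrArg (fun t => H.comp t (H.inv g)) h
  simpa [H.comp_assoc, H.comp_inv, H.comp_id, H.id_comp] using this

theorem inv_comp_rev {x y z : H.Obj} (g : H.Hom y z) (f : H.Hom x y) :
    H.inv (H.comp g f) = H.comp (H.inv f) (H.inv g) := by
  refine (inv_unique _ _ ?_).symm
  rw [H.comp_assoc, inv_comp_cancel_left, H.inv_comp]

theorem inv_inv' {x y : H.Obj} (f : H.Hom x y) : H.inv (H.inv f) = f := by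
  refine (inv_unique _ _ ?_).symm
  exact H.comp_inv f

theorem D_inv2 {x : H.Obj} (a : H.G2 x) : H.D (H.inv2 a) = H.inv (H.D a) := by
  refine inv_unique _ _ ?_
  rw [← H.D_mul, H.inv2_mul, H.D_one]

theorem peiffer' {x : H.Obj} (a b : H.G2 x) : H.Ad (H.D a) b = a * b * a⁻¹ :=
  H.peiffer a b

theorem Ad_id_self {x : H.Obj} (e : H.Hom x x) (he : e = H.id x) (b : H.G2 x) :
    H.Ad e b = b := by rw [he, H.Ad_id]

/-- Abstract form of the first descent condition for the transported datum. -/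
theorem abstract1 {x0 x1 x2 y0 y1 y2 : H.Obj}
    (g01 : H.Hom x0 x1) (g12 : H.Hom x1 x2) (g02 : H.Hom x0 x2)
    (a : H.G2 x0) (f0 : H.Hom x0 y0) (f1 : H.Hom x1 y1) (f2 : H.Hom x2 y2)
    (c01 c02 : H.G2 x0) (c12 : H.G2 x1)
    (hyp : H.comp (H.comp (H.inv g02) g12) g01 = H.D a) :
    H.comp (H.comp
        (H.inv (H.comp (H.comp (H.comp f2 g02) (H.D c02)) (H.inv f0)))
        (H.comp (H.comp (H.comp f2 g12) (H.D c12)) (H.inv f1)))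
      (H.comp (H.comp (H.comp f1 g01) (H.D c01)) (H.inv f0))
    = H.D (H.Ad f0 (H.mul (H.mul (H.mul (H.inv2 c02) a)
        (H.Ad (H.inv g01) c12)) c01)) := by
  have key : H.comp (H.D c12) g01 = H.comp g01 (H.D (H.Ad (H.inv g01) c12)) := by
    rw [H.D_Ad, inv_inv', ← H.comp_assoc, ← H.comp_assoc, H.comp_inv, H.id_comp]
  rw [H.D_Ad]
  rw [H.D_mul, H.D_mul, H.D_mul, D_inv2]
  rw [inv_comp_rev, inv_comp_rev, inv_comp_rev, inv_inv']
  -- now pure rearrangement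
  simp only [H.comp_assoc]
  congr 1
  rw [← H.comp_assoc (H.inv (H.D c02))]
  simp only [inv_comp_cancel_left, comp_inv_cancel_left]
  rw [← H.comp_assoc (H.D c12) g01, key, ← hyp]
  simp only [H.comp_assoc]

/-- Abstract form of the twisted 2-cocycle condition for the transported datum. -/
theorem abstract2 {x0 x1 x2 y0 y1 : H.Obj}
    (g01 : H.Hom x0 x1) (g02 : H.Hom x0 x2) (g12 : H.Hom x1 x2)
    (a012 a013 a023 : H.G2 x0) (a123 : H.G2 x1)
    (c01 c02 c03 : H.G2 x0) (c12 c13 : H.G2 x1) (c23 : H.G2 x2)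
    (f0 : H.Hom x0 y0) (f1 : H.Hom x1 y1)
    (h012 : H.comp (H.comp (H.inv g02) g12) g01 = H.D a012)
    (hR2 : H.mul (H.mul (H.inv2 a013) a023) a012 = H.Ad (H.inv g01) a123) :
    H.mul (H.mul
        (H.inv2 (H.Ad f0 (H.mul (H.mul (H.mul (H.inv2 c03) a013) (H.Ad (H.inv g01) c13)) c01)))
        (H.Ad f0 (H.mul (H.mul (H.mul (H.inv2 c03) a023) (H.Ad (H.inv g02) c23)) c02)))
      (H.Ad f0 (H.mul (H.mul (H.mul (H.inv2 c02) a012) (H.Ad (H.inv g01) c12)) c01))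
    = H.Ad (H.inv (H.comp (H.comp (H.comp f1 g01) (H.D c01)) (H.inv f0)))
        (H.Ad f1 (H.mul (H.mul (H.mul (H.inv2 c13) a123) (H.Ad (H.inv g12) c23)) c12)) := by
  have inv2_inv2 : ∀ {x : H.Obj} (u : H.G2 x), H.inv2 (H.inv2 u) = u := by
    intro x u; rw [inv2_def, inv2_def, inv_inv]
  have hAa : H.Ad (H.inv g01) a123 = H.mul (H.mul (H.inv2 a013) a023) a012 := hR2.symm
  have hcomp02 : H.comp (H.D a012) (H.inv (H.comp g12 g01)) = H.inv g02 := by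
    rw [← h012, inv_comp_rev, H.comp_assoc, H.comp_assoc]
    rw [← H.comp_assoc g01, H.comp_inv, H.id_comp, H.comp_inv, H.comp_id]
  have key : H.Ad (H.inv g01) (H.Ad (H.inv g12) c23)
      = H.mul (H.mul (H.inv2 a012) (H.Ad (H.inv g02) c23)) a012 := by
    rw [← H.Ad_comp, ← inv_comp_rev, ← hcomp02, H.Ad_comp, H.peiffer]
    simp only [mul_def, inv2_def]
    group
  rw [inv_comp_rev, inv_comp_rev, inv_comp_rev, inv_inv']
  rw [H.Ad_comp, H.Ad_comp, H.Ad_comp, ← H.Ad_comp (H.inv f1) f1, H.inv_comp, H.Ad_id]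
  rw [← D_inv2, H.peiffer]
  simp only [hAa, key, H.Ad_mul, Ad_inv2, inv2_inv2]
  simp only [mul_def, inv2_def]
  group

end CrossedGroupoid

/-! ### Cast and push machinery -/

namespace CrossedGroupoid

theorem hcast_heq (H : CrossedGroupoid) {x x' y y' : H.Obj} (ex : x = x') (ey : y = y')
    (f : H.Hom x y) : HEq (H.hcast ex ey f) f := by subst ex; subst ey; rfl

theorem cast2_heq (H : CrossedGroupoid) {x x' : H.Obj} (e : x = x') (a : H.G2 x) :
    HEq (H.cast2 e a) a := by subst e; rfl

theorem comp_hcongr {H : CrossedGroupoid} {x y z x' y' z' : H.Obj}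
    (hx : x = x') (hy : y = y') (hz : z = z')
    {g : H.Hom y z} {g' : H.Hom y' z'} {f : H.Hom x y} {f' : H.Hom x' y'}
    (hg : HEq g g') (hf : HEq f f') : HEq (H.comp g f) (H.comp g' f') := by
  subst hx; subst hy; subst hz
  rw [eq_of_heq hg, eq_of_heq hf]

theorem inv_hcongr {H : CrossedGroupoid} {x y x' y' : H.Obj}
    (hx : x = x') (hy : y = y') {f : H.Hom x y} {f' : H.Hom x' y'}
    (hf : HEq f f') : HEq (H.inv f) (H.inv f') := by
  subst hx; subst hy; rw [eq_of_heq hf]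

theorem D_hcongr {H : CrossedGroupoid} {x x' : H.Obj} (hx : x = x')
    {a : H.G2 x} {a' : H.G2 x'} (ha : HEq a a') : HEq (H.D a) (H.D a') := by
  subst hx; rw [eq_of_heq ha]

theorem Ad_hcongr {H : CrossedGroupoid} {x y x' y' : H.Obj}
    (hx : x = x') (hy : y = y') {g : H.Hom x y} {g' : H.Hom x' y'}
    {a : H.G2 x} {a' : H.G2 x'} (hg : HEq g g') (ha : HEq a a') :
    HEq (H.Ad g a) (H.Ad g' a') := by
  subst hx; subst hy; rw [eq_of_heq hg, eq_of_heq ha]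

theorem mul_hcongr {H : CrossedGroupoid} {x x' : H.Obj} (hx : x = x')
    {a b : H.G2 x} {a' b' : H.G2 x'} (ha : HEq a a') (hb : HEq b b') :
    HEq (H.mul a b) (H.mul a' b') := by
  subst hx; rw [eq_of_heq ha, eq_of_heq hb]

theorem inv2_hcongr {H : CrossedGroupoid} {x x' : H.Obj} (hx : x = x')
    {a : H.G2 x} {a' : H.G2 x'} (ha : HEq a a') : HEq (H.inv2 a) (H.inv2 a') := by
  subst hx; rw [eq_of_heq ha]

end CrossedGroupoid

namespace CrossedGroupoidHom

variable {G H : CrossedGroupoid}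

theorem map1_hcongr (F : CrossedGroupoidHom G H) {x y x' y' : G.Obj}
    (hx : x = x') (hy : y = y') {f : G.Hom x y} {f' : G.Hom x' y'}
    (hf : HEq f f') : HEq (F.map1 f) (F.map1 f') := by
  subst hx; subst hy; rw [eq_of_heq hf]

theorem map2_hcongr (F : CrossedGroupoidHom G H) {x x' : G.Obj}
    (hx : x = x') {a : G.G2 x} {a' : G.G2 x'}
    (ha : HEq a a') : HEq (F.map2 a) (F.map2 a') := by
  subst hx; rw [eq_of_heq ha]

theorem map1_inv (F : CrossedGroupoidHom G H) {x y : G.Obj} (f : G.Hom x y) :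
    F.map1 (G.inv f) = H.inv (F.map1 f) := by
  refine CrossedGroupoid.inv_unique _ _ ?_
  rw [← F.map1_comp, G.inv_comp, F.map1_id]

theorem map2_one (F : CrossedGroupoidHom G H) (x : G.Obj) :
    F.map2 (G.one x) = H.one (F.obj x) := by
  have h : H.mul (F.map2 (G.one x)) (F.map2 (G.one x)) = F.map2 (G.one x) := by
    rw [← F.map2_mul, G.one_mul]
  calc F.map2 (G.one x) = H.mul (H.mul (H.inv2 (F.map2 (G.one x))) (F.map2 (G.one x)))
        (F.map2 (G.one x)) := by rw [H.inv2_mul, H.one_mul]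
    _ = H.mul (H.inv2 (F.map2 (G.one x))) (H.mul (F.map2 (G.one x)) (F.map2 (G.one x))) :=
        H.mul_assoc _ _ _
    _ = H.one (F.obj x) := by rw [h, H.inv2_mul]

theorem map2_inv2 (F : CrossedGroupoidHom G H) {x : G.Obj} (a : G.G2 x) :
    F.map2 (G.inv2 a) = H.inv2 (F.map2 a) := by
  have h : H.mul (F.map2 (G.inv2 a)) (F.map2 a) = H.one _ := by
    rw [← F.map2_mul, G.inv2_mul, F.map2_one]
  show F.map2 (G.inv2 a) = (F.map2 a)⁻¹
  exact eq_inv_of_mul_eq_one_left h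

end CrossedGroupoidHom

namespace CosimplicialCrossedGroupoid

variable (G : CosimplicialCrossedGroupoid)

/-- Generalized push of a 1-morphism between vertex objects over possibly
different base points. -/
def push1'' {x y : (G.obj 0).Obj} {p q : ℕ} (α : Fin (p + 1) →o Fin (q + 1))
    {i j : Fin (p + 1)} (g : (G.obj p).Hom (G.X x p i) (G.X y p j)) :
    (G.obj q).Hom (G.X x q (α i)) (G.X y q (α j)) :=
  (G.obj q).hcast (G.X_push x α i) (G.X_push y α j) ((G.map α).map1 g)

theorem push1_eq {x : (G.obj 0).Obj} {p q : ℕ} (α : Fin (p + 1) →o Fin (q + 1))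
    {i j : Fin (p + 1)} (g : (G.obj p).Hom (G.X x p i) (G.X x p j)) :
    G.push1 α g = G.push1'' α g := rfl

theorem push1''_heq {x y : (G.obj 0).Obj} {p q : ℕ} (α : Fin (p + 1) →o Fin (q + 1))
    {i j : Fin (p + 1)} (g : (G.obj p).Hom (G.X x p i) (G.X y p j)) :
    HEq (G.push1'' α g) ((G.map α).map1 g) :=
  (G.obj q).hcast_heq _ _ _

theorem push2_heq {x : (G.obj 0).Obj} {p q : ℕ} (α : Fin (p + 1) →o Fin (q + 1))
    {i : Fin (p + 1)} (a : (G.obj p).G2 (G.X x p i)) :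
    HEq (G.push2 α a) ((G.map α).map2 a) :=
  (G.obj q).cast2_heq _ _

theorem map_comp_map1_heq {p q r : ℕ} (β : Fin (q + 1) →o Fin (r + 1))
    (α : Fin (p + 1) →o Fin (q + 1)) {x y : (G.obj p).Obj} (f : (G.obj p).Hom x y) :
    HEq ((G.map (β.comp α)).map1 f) ((G.map β).map1 ((G.map α).map1 f)) := by
  rw [G.map_comp]; exact HEq.rfl

theorem map_comp_map2_heq {p q r : ℕ} (β : Fin (q + 1) →o Fin (r + 1))
    (α : Fin (p + 1) →o Fin (q + 1)) {x : (G.obj p).Obj} (a : (G.obj p).G2 x) :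
    HEq ((G.map (β.comp α)).map2 a) ((G.map β).map2 ((G.map α).map2 a)) := by
  rw [G.map_comp]; exact HEq.rfl

theorem push1''_comp {x y : (G.obj 0).Obj} {p q r : ℕ} (β : Fin (q + 1) →o Fin (r + 1))
    (α : Fin (p + 1) →o Fin (q + 1)) {i j : Fin (p + 1)}
    (g : (G.obj p).Hom (G.X x p i) (G.X y p j)) :
    G.push1'' (β.comp α) g = G.push1'' β (G.push1'' α g) := by
  apply eq_of_heq
  refine ((G.push1''_heq _ g).trans (G.map_comp_map1_heq β α g)).trans (HEq.symm ?_)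
  refine (G.push1''_heq _ _).trans ?_
  exact (G.map β).map1_hcongr (G.X_push x α i).symm (G.X_push y α j).symm (G.push1''_heq α g)

theorem push2_comp {x : (G.obj 0).Obj} {p q r : ℕ} (β : Fin (q + 1) →o Fin (r + 1))
    (α : Fin (p + 1) →o Fin (q + 1)) {i : Fin (p + 1)}
    (a : (G.obj p).G2 (G.X x p i)) :
    G.push2 (β.comp α) a = G.push2 β (G.push2 α a) := by
  apply eq_of_heq
  refine ((G.push2_heq _ a).trans (G.map_comp_map2_heq β α a)).trans (HEq.symm ?_)
  refine (G.push2_heq _ _).trans ?_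
  exact (G.map β).map2_hcongr (G.X_push x α i).symm (G.push2_heq α a)

theorem push1''_comp_hom {x y z : (G.obj 0).Obj} {p q : ℕ} (α : Fin (p + 1) →o Fin (q + 1))
    {i j k : Fin (p + 1)} (h : (G.obj p).Hom (G.X y p j) (G.X z p k))
    (g : (G.obj p).Hom (G.X x p i) (G.X y p j)) :
    G.push1'' α ((G.obj p).comp h g) = (G.obj q).comp (G.push1'' α h) (G.push1'' α g) := by
  apply eq_of_heq
  refine (G.push1''_heq _ _).trans ?_
  rw [(G.map α).map1_comp]
  exact CrossedGroupoid.comp_hcongr (G.X_push x α i) (G.X_push y α j)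
    (G.X_push z α k) (HEq.symm (G.push1''_heq α h)) (HEq.symm (G.push1''_heq α g))

theorem push1''_inv {x y : (G.obj 0).Obj} {p q : ℕ} (α : Fin (p + 1) →o Fin (q + 1))
    {i j : Fin (p + 1)} (g : (G.obj p).Hom (G.X x p i) (G.X y p j)) :
    G.push1'' α ((G.obj p).inv g) = (G.obj q).inv (G.push1'' α g) := by
  apply eq_of_heq
  refine (G.push1''_heq _ _).trans ?_
  rw [(G.map α).map1_inv]
  exact CrossedGroupoid.inv_hcongr (G.X_push x α i) (G.X_push y α j)
    (HEq.symm (G.push1''_heq α g))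

theorem push1''_D {x : (G.obj 0).Obj} {p q : ℕ} (α : Fin (p + 1) →o Fin (q + 1))
    {i : Fin (p + 1)} (a : (G.obj p).G2 (G.X x p i)) :
    G.push1'' α ((G.obj p).D a) = (G.obj q).D (G.push2 α a) := by
  apply eq_of_heq
  refine (G.push1''_heq _ _).trans ?_
  rw [(G.map α).map_D]
  exact CrossedGroupoid.D_hcongr (G.X_push x α i) (HEq.symm (G.push2_heq α a))

theorem push2_mul {x : (G.obj 0).Obj} {p q : ℕ} (α : Fin (p + 1) →o Fin (q + 1))
    {i : Fin (p + 1)} (a b : (G.obj p).G2 (G.X x p i)) :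
    G.push2 α ((G.obj p).mul a b) = (G.obj q).mul (G.push2 α a) (G.push2 α b) := by
  apply eq_of_heq
  refine (G.push2_heq _ _).trans ?_
  rw [(G.map α).map2_mul]
  exact CrossedGroupoid.mul_hcongr (G.X_push x α i)
    (HEq.symm (G.push2_heq α a)) (HEq.symm (G.push2_heq α b))

theorem push2_inv2 {x : (G.obj 0).Obj} {p q : ℕ} (α : Fin (p + 1) →o Fin (q + 1))
    {i : Fin (p + 1)} (a : (G.obj p).G2 (G.X x p i)) :
    G.push2 α ((G.obj p).inv2 a) = (G.obj q).inv2 (G.push2 α a) := by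
  apply eq_of_heq
  refine (G.push2_heq _ _).trans ?_
  rw [(G.map α).map2_inv2]
  exact CrossedGroupoid.inv2_hcongr (G.X_push x α i) (HEq.symm (G.push2_heq α a))

theorem push2_Ad {x y : (G.obj 0).Obj} {p q : ℕ} (α : Fin (p + 1) →o Fin (q + 1))
    {i j : Fin (p + 1)} (g : (G.obj p).Hom (G.X x p i) (G.X y p j))
    (a : (G.obj p).G2 (G.X x p i)) :
    G.push2 α ((G.obj p).Ad g a) = (G.obj q).Ad (G.push1'' α g) (G.push2 α a) := by
  apply eq_of_heq
  refine (G.push2_heq _ _).trans ?_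
  rw [(G.map α).map_Ad]
  exact CrossedGroupoid.Ad_hcongr (G.X_push x α i) (G.X_push y α j)
    (HEq.symm (G.push1''_heq α g)) (HEq.symm (G.push2_heq α a))

theorem push1''_vtx {x x' : (G.obj 0).Obj} {p q : ℕ} (α : Fin (p + 1) →o Fin (q + 1))
    (k : Fin (p + 1)) (f : (G.obj 0).Hom x x') :
    G.push1'' α (x := x) (y := x') (i := k) (j := k) ((G.map (vtxMap k)).map1 f)
      = (G.map (vtxMap (α k))).map1 f := by
  apply eq_of_heq
  refine (G.push1''_heq _ _).trans ?_
  exact HEq.symm (G.map_comp_map1_heq α (vtxMap k) f)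

theorem push2_ocongr {x : (G.obj 0).Obj} {p q : ℕ} {α β : Fin (p + 1) →o Fin (q + 1)}
    (h : α = β) {i : Fin (p + 1)} (a : (G.obj p).G2 (G.X x p i)) :
    HEq (G.push2 α a) (G.push2 β a) := by subst h; rfl

theorem push1''_ocongr {x y : (G.obj 0).Obj} {p q : ℕ} {α β : Fin (p + 1) →o Fin (q + 1)}
    (h : α = β) {i j : Fin (p + 1)} (g : (G.obj p).Hom (G.X x p i) (G.X y p j)) :
    HEq (G.push1'' α g) (G.push1'' β g) := by subst h; rfl

end CosimplicialCrossedGroupoid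

/-! ### Simplex combinatorics and push identities -/

theorem triMap_comp_edge01 {q : ℕ} (i j k : Fin (q + 1)) (hij : i ≤ j) (hjk : j ≤ k) :
    (triMap i j k hij hjk).comp (edgeMap (0 : Fin 3) (1 : Fin 3) (by decide))
      = edgeMap i j hij := by
  apply OrderHom.ext; funext m; fin_cases m <;> rfl

theorem triMap_comp_edge02 {q : ℕ} (i j k : Fin (q + 1)) (hij : i ≤ j) (hjk : j ≤ k) :
    (triMap i j k hij hjk).comp (edgeMap (0 : Fin 3) (2 : Fin 3) (by decide))
      = edgeMap i k (hij.trans hjk) := by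
  apply OrderHom.ext; funext m; fin_cases m <;> rfl

theorem triMap_comp_edge12 {q : ℕ} (i j k : Fin (q + 1)) (hij : i ≤ j) (hjk : j ≤ k) :
    (triMap i j k hij hjk).comp (edgeMap (1 : Fin 3) (2 : Fin 3) (by decide))
      = edgeMap j k hjk := by
  apply OrderHom.ext; funext m; fin_cases m <;> rfl

namespace CosimplicialCrossedGroupoid

variable (G : CosimplicialCrossedGroupoid)

/-- Pushing the partially-transformed 1-morphism along an edge. -/
theorem push_edge_gauge {x x' : (G.obj 0).Obj} (f : (G.obj 0).Hom x x')
    (g : (G.obj 1).Hom (G.X x 1 0) (G.X x 1 1)) (c : (G.obj 1).G2 (G.X x 1 0))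
    {q : ℕ} (i j : Fin (q + 1)) (hij : i ≤ j) :
    G.push1 (edgeMap i j hij) ((G.obj 1).comp ((G.obj 1).comp ((G.obj 1).comp
        ((G.map (vtxMap (1 : Fin 2))).map1 f) g) ((G.obj 1).D c))
        ((G.obj 1).inv ((G.map (vtxMap (0 : Fin 2))).map1 f)))
      = (G.obj q).comp ((G.obj q).comp ((G.obj q).comp
          ((G.map (vtxMap j)).map1 f) (G.push1 (edgeMap i j hij) g))
          ((G.obj q).D (G.push2 (edgeMap i j hij) c)))
        ((G.obj q).inv ((G.map (vtxMap i)).map1 f)) := by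
  rw [push1_eq, push1_eq]
  erw [G.push1''_comp_hom, G.push1''_comp_hom, G.push1''_comp_hom, G.push1''_inv,
    G.push1''_D, G.push1''_vtx, G.push1''_vtx]
  rfl

/-- Pushing the transported 2-morphism along a triangle. -/
theorem push_tri_transport {x x' : (G.obj 0).Obj} (f : (G.obj 0).Hom x x')
    (g : (G.obj 1).Hom (G.X x 1 0) (G.X x 1 1))
    (a : (G.obj 2).G2 (G.X x 2 0)) (c : (G.obj 1).G2 (G.X x 1 0))
    (i j k : Fin 4) (hij : i ≤ j) (hjk : j ≤ k) :
    G.push2 (triMap i j k hij hjk) (G.transportA f g a c)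
      = (G.obj 3).Ad ((G.map (vtxMap i)).map1 f)
        ((G.obj 3).mul ((G.obj 3).mul ((G.obj 3).mul
            ((G.obj 3).inv2 (G.push2 (edgeMap i k (hij.trans hjk)) c))
            (G.push2 (triMap i j k hij hjk) a))
            ((G.obj 3).Ad ((G.obj 3).inv (G.push1 (edgeMap i j hij) g))
              (G.push2 (edgeMap j k hjk) c)))
          (G.push2 (edgeMap i j hij) c)) := by
  unfold transportA
  erw [G.push2_Ad, G.push2_mul, G.push2_mul, G.push2_mul, G.push2_inv2, G.push2_Ad,
    push1_eq, push1_eq, G.push1''_inv, G.push1''_vtx]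
  erw [← G.push2_comp, ← G.push2_comp, ← G.push2_comp, ← G.push1''_comp]
  apply eq_of_heq
  refine CrossedGroupoid.Ad_hcongr rfl rfl HEq.rfl ?_
  refine CrossedGroupoid.mul_hcongr rfl ?_ (G.push2_ocongr (triMap_comp_edge01 i j k hij hjk) c)
  refine CrossedGroupoid.mul_hcongr rfl ?_ ?_
  · refine CrossedGroupoid.mul_hcongr rfl ?_ HEq.rfl
    exact CrossedGroupoid.inv2_hcongr rfl (G.push2_ocongr (triMap_comp_edge02 i j k hij hjk) c)
  · refine CrossedGroupoid.Ad_hcongr rfl rfl ?_ (G.push2_ocongr (triMap_comp_edge12 i j k hij hjk) c)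
    exact CrossedGroupoid.inv_hcongr rfl rfl (G.push1''_ocongr (triMap_comp_edge01 i j k hij hjk) g)

/-- Pushing the first descent condition along a triangle. -/
theorem push_tri_descent1 {x : (G.obj 0).Obj}
    (g : (G.obj 1).Hom (G.X x 1 0) (G.X x 1 1)) (a : (G.obj 2).G2 (G.X x 2 0))
    (i j k : Fin 4) (hij : i ≤ j) (hjk : j ≤ k)
    (h1 : (G.obj 2).comp ((G.obj 2).comp
        ((G.obj 2).inv (G.push1 (edgeMap (0 : Fin 3) 2 (by decide)) g))
        (G.push1 (edgeMap (1 : Fin 3) 2 (by decide)) g))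
        (G.push1 (edgeMap (0 : Fin 3) 1 (by decide)) g) = (G.obj 2).D a) :
    (G.obj 3).comp ((G.obj 3).comp
        ((G.obj 3).inv (G.push1 (edgeMap i k (hij.trans hjk)) g))
        (G.push1 (edgeMap j k hjk) g))
        (G.push1 (edgeMap i j hij) g)
      = (G.obj 3).D (G.push2 (triMap i j k hij hjk) a) := by
  have h2 := congrArg (fun t => G.push1'' (triMap i j k hij hjk) t) h1
  simp only [push1_eq] at h2 ⊢
  erw [G.push1''_comp_hom, G.push1''_comp_hom, G.push1''_inv, G.push1''_D] at h2
  erw [← G.push1''_comp, ← G.push1''_comp, ← G.push1''_comp] at h2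
  refine Eq.trans (eq_of_heq ?_) h2
  refine CrossedGroupoid.comp_hcongr rfl rfl rfl ?_ ((G.push1''_ocongr (triMap_comp_edge01 i j k hij hjk) g).symm)
  refine CrossedGroupoid.comp_hcongr rfl rfl rfl ?_ ((G.push1''_ocongr (triMap_comp_edge12 i j k hij hjk) g).symm)
  exact CrossedGroupoid.inv_hcongr rfl rfl ((G.push1''_ocongr (triMap_comp_edge02 i j k hij hjk) g).symm)

end CosimplicialCrossedGroupoid

/-- Lemma 1.9: a partial gauge transformation out of a descent datum
is completed by a unique 2-morphism a', given by the explicit formula `transportA`. -/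
theorem partial_gauge_completion (G : CosimplicialCrossedGroupoid) (P : G.Desc)
    (x' : (G.obj 0).Obj) (g' : (G.obj 1).Hom (G.X x' 1 0) (G.X x' 1 1))
    (f : (G.obj 0).Hom P.x x') (c : (G.obj 1).G2 (G.X P.x 1 0))
    (hpartial : g' = (G.obj 1).comp ((G.obj 1).comp ((G.obj 1).comp
      ((G.map (vtxMap (1 : Fin 2))).map1 f) P.g) ((G.obj 1).D c))
      ((G.obj 1).inv ((G.map (vtxMap (0 : Fin 2))).map1 f))) :
    (G.IsDescent x' g' (G.transportA f P.g P.a c) ∧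
      G.IsGauge P.x P.g P.a x' g' (G.transportA f P.g P.a c) f c) ∧
    (∀ a' : (G.obj 2).G2 (G.X x' 2 0),
      G.IsDescent x' g' a' → G.IsGauge P.x P.g P.a x' g' a' f c →
        a' = G.transportA f P.g P.a c) := by
  subst hpartial
  refine ⟨⟨⟨?_, ?_⟩, rfl, rfl⟩, fun a' _ hg => hg.2⟩
  · erw [G.push_edge_gauge, G.push_edge_gauge, G.push_edge_gauge]
    exact CrossedGroupoid.abstract1 _ _ _ _ _ _ _ _ _ _ P.isDescent.1
  · simp only [G.push_tri_transport]
    erw [G.push_edge_gauge]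
    exact CrossedGroupoid.abstract2 _ _ _ _ _ _ _ _ _ _ _ _ _ _ _
      (G.push_tri_descent1 P.g P.a 0 1 2 (by decide) (by decide) P.isDescent.1)
      P.isDescent.2
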